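/- Let E be a Krull-Schmidt exact category with a progenerator P and an injective cogenerator I. Suppose E has only finitely many isomorphism classes of indecomposable objects and that the projective dimension pd_E I of I in E is finite. Then the injective dimension id_E P of P in E is finite. -/

import Mathlib

open CategoryTheory Limits

noncomputable section

namespace PaperWakCat

universe v u

variable {C : Type u} [Category.{v} C] [Abelian C]

instance (priority := 100) : HasFiniteBiproducts C := Abelian.hasFiniteBiproducts

/-- a conflation of the exact subcategory `E`: a short exact sequence of the
ambient abelian category all of whose terms lie in `E`. -/
def Confl (E : Set C) {X Y Z : C} (f : X ⟶ Y) (g : Y ⟶ Z) : Prop :=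
  X ∈ E ∧ Y ∈ E ∧ Z ∈ E ∧ ∃ w : f ≫ g = 0, (ShortComplex.mk f g w).ShortExact

def IsoClosedC (E : Set C) : Prop := ∀ X ∈ E, ∀ Y : C, Nonempty (X ≅ Y) → Y ∈ E

def ExtClosedC (E : Set C) : Prop :=
  ∀ (X Y Z : C) (f : X ⟶ Y) (g : Y ⟶ Z) (w : f ≫ g = 0),
    (ShortComplex.mk f g w).ShortExact → X ∈ E → Z ∈ E → Y ∈ E

def SummandClosedC (E : Set C) : Prop :=
  ∀ X Y : C, (X ⊞ Y) ∈ E → X ∈ E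

def memAddC (P M : C) : Prop :=
  ∃ (n : ℕ) (ι : M ⟶ ⨁ (fun _ : Fin n => P)) (π : (⨁ fun _ : Fin n => P) ⟶ M),
    ι ≫ π = 𝟙 M

/-- `P` is a projective object of the exact category `E`. -/
def ProjC (E : Set C) (P : C) : Prop :=
  P ∈ E ∧ ∀ (X Y Z : C) (f : X ⟶ Y) (g : Y ⟶ Z), Confl E f g →
    ∀ h : P ⟶ Z, ∃ l : P ⟶ Y, l ≫ g = h

/-- `I` is an injective object of the exact category `E`. -/
def InjC (E : Set C) (I : C) : Prop :=
  I ∈ E ∧ ∀ (X Y Z : C) (f : X ⟶ Y) (g : Y ⟶ Z), Confl E f g →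
    ∀ h : X ⟶ I, ∃ l : Y ⟶ I, f ≫ l = h

/-- `P` is a progenerator of the exact category `E`: `E` has enough projectives
and the projective objects of `E` are exactly `add P`. -/
def ProgenC (E : Set C) (P : C) : Prop :=
  (∀ X ∈ E, ∃ (X' Q : C) (f : X' ⟶ Q) (g : Q ⟶ X), Confl E f g ∧ ProjC E Q) ∧
    ∀ M : C, memAddC P M ↔ ProjC E M

/-- `I` is an injective cogenerator of the exact category `E`. -/
def InjCogenC (E : Set C) (I : C) : Prop :=
  (∀ X ∈ E, ∃ (J X' : C) (f : X ⟶ J) (g : J ⟶ X'), Confl E f g ∧ InjC E J) ∧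
    ∀ M : C, memAddC I M ↔ InjC E M

/-- `pd_E M ≤ d`. -/
def pdLEC (E : Set C) (M : C) (d : ℕ) : Prop :=
  ∃ (K P : ℕ → C) (f : ∀ n, K (n + 1) ⟶ P n) (g : ∀ n, P n ⟶ K n),
    K 0 = M ∧ (∀ n, ProjC E (P n)) ∧ (∀ n, Confl E (f n) (g n)) ∧ IsZero (K (d + 1))

/-- `id_E M ≤ d`. -/
def idLEC (E : Set C) (M : C) (d : ℕ) : Prop :=
  ∃ (K I : ℕ → C) (f : ∀ n, K n ⟶ I n) (g : ∀ n, I n ⟶ K (n + 1)),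
    K 0 = M ∧ (∀ n, InjC E (I n)) ∧ (∀ n, Confl E (f n) (g n)) ∧ IsZero (K (d + 1))

/-- `E` is Krull–Schmidt: every object is a finite direct sum of objects
with local endomorphism rings. -/
def KrullSchmidtC (E : Set C) : Prop :=
  ∀ X ∈ E, ∃ (n : ℕ) (Y : Fin n → C),
    (∀ i, IsLocalRing (End (Y i))) ∧ Nonempty (X ≅ ⨁ Y)

def IndecC (X : C) : Prop :=
  ¬ IsZero X ∧ ∀ Y Z : C, Nonempty (X ≅ Y ⊞ Z) → IsZero Y ∨ IsZero Z

def isoSetoidC (C : Type u) [Category.{v} C] : Setoid C :=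
  ⟨fun X Y => Nonempty (X ≅ Y),
    ⟨fun X => ⟨Iso.refl X⟩, fun ⟨e⟩ => ⟨e.symm⟩, fun ⟨e⟩ ⟨f⟩ => ⟨e.trans f⟩⟩⟩

def IsoClassesC (S : Set C) : Type u :=
  Quotient ((isoSetoidC C).comap (Subtype.val : S → C))

/-- `E` is Hom-finite over `R`. -/
def HomFiniteC (R : Type) [CommRing R] (E : Set C) [Linear R C] : Prop :=
  ∀ X Y : C, X ∈ E → Y ∈ E → Module.Finite R (X ⟶ Y)


section Aux

set_option linter.unusedSectionVars false

variable {E : Set C}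

open ZeroObject

/-! ### Basic lemmas -/

lemma memAddC_self (P : C) : memAddC P P := by
  refine ⟨1, biproduct.lift (fun _ => 𝟙 P), biproduct.π _ 0, by simp⟩

lemma memAddC_retract {P M M' : C} (i : M' ⟶ M) (p : M ⟶ M') (hip : i ≫ p = 𝟙 M')
    (h : memAddC P M) : memAddC P M' := by
  obtain ⟨n, ι, π, hh⟩ := h
  refine ⟨n, i ≫ ι, π ≫ p, ?_⟩
  rw [Category.assoc, ← Category.assoc ι, hh, Category.id_comp, hip]

lemma memAddC_of_isZero {P M : C} (h : IsZero M) : memAddC P M := by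
  refine ⟨0, 0, 0, ?_⟩
  rw [zero_comp]
  exact h.eq_of_src _ _

lemma mem_of_iso (hiso : IsoClosedC E) {X Y : C} (e : X ≅ Y) (hX : X ∈ E) : Y ∈ E :=
  hiso X hX Y ⟨e⟩

lemma confl_w {X Y Z : C} {f : X ⟶ Y} {g : Y ⟶ Z} (h : Confl E f g) : f ≫ g = 0 :=
  h.2.2.2.choose

lemma confl_shortExact {X Y Z : C} {f : X ⟶ Y} {g : Y ⟶ Z} (h : Confl E f g) :
    (ShortComplex.mk f g (confl_w h)).ShortExact := by
  obtain ⟨_, _, _, w, hw⟩ := h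
  exact hw

lemma confl_mono {X Y Z : C} {f : X ⟶ Y} {g : Y ⟶ Z} (h : Confl E f g) : Mono f :=
  (confl_shortExact h).mono_f

lemma confl_epi {X Y Z : C} {f : X ⟶ Y} {g : Y ⟶ Z} (h : Confl E f g) : Epi g :=
  (confl_shortExact h).epi_g

/-- Construct a short exact complex from mono, epi and the kernel property. -/
lemma shortExact_mk' {X Y Z : C} {f : X ⟶ Y} {g : Y ⟶ Z} (w : f ≫ g = 0)
    (hm : Mono f) (he : Epi g)
    (hker : ∀ {T : C} (t : T ⟶ Y), t ≫ g = 0 → ∃ u : T ⟶ X, u ≫ f = t) :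
    (ShortComplex.mk f g w).ShortExact := by
  have hl : IsLimit (KernelFork.ofι f w) := by
    haveI := hm
    exact KernelFork.IsLimit.ofι' f w
      (fun {T} t ht => ⟨(hker t ht).choose, (hker t ht).choose_spec⟩)
  exact { exact := ShortComplex.exact_of_f_is_kernel _ hl, mono_f := hm, epi_g := he }

lemma confl_mk (hext : ExtClosedC E) {X Y Z : C} {f : X ⟶ Y} {g : Y ⟶ Z}
    (w : f ≫ g = 0) (hse : (ShortComplex.mk f g w).ShortExact)
    (hX : X ∈ E) (hZ : Z ∈ E) : Confl E f g :=
  ⟨hX, hext X Y Z f g w hse hX hZ, hZ, w, hse⟩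

/-- transport a conflation along isomorphisms of all three objects -/
lemma confl_of_iso (hiso : IsoClosedC E) {X Y Z X' Y' Z' : C} {f : X ⟶ Y} {g : Y ⟶ Z}
    (h : Confl E f g) (eX : X ≅ X') (eY : Y ≅ Y') (eZ : Z ≅ Z') :
    Confl E (eX.inv ≫ f ≫ eY.hom) (eY.inv ≫ g ≫ eZ.hom) := by
  obtain ⟨hX, hY, hZ, w, hse⟩ := h
  have w' : (eX.inv ≫ f ≫ eY.hom) ≫ (eY.inv ≫ g ≫ eZ.hom) = 0 := by
    simp [reassoc_of% w]
  refine ⟨mem_of_iso hiso eX hX, mem_of_iso hiso eY hY, mem_of_iso hiso eZ hZ, w', ?_⟩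
  exact ShortComplex.shortExact_of_iso
    (ShortComplex.isoMk (S₁ := ShortComplex.mk f g w) (S₂ := ShortComplex.mk _ _ w')
      eX eY eZ (by simp) (by simp)) hse

lemma projC_of_memAdd {P M : C} (hP : ProgenC E P) (h : memAddC P M) : ProjC E M :=
  (hP.2 M).1 h

lemma projC_mem {M : C} (h : ProjC E M) : M ∈ E := h.1

lemma projC_of_isZero {P M : C} (hP : ProgenC E P) (h : IsZero M) : ProjC E M :=
  projC_of_memAdd hP (memAddC_of_isZero h)

lemma projC_self {P : C} (hP : ProgenC E P) : ProjC E P :=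
  projC_of_memAdd hP (memAddC_self P)

lemma injC_of_memAdd {I M : C} (hI : InjCogenC E I) (h : memAddC I M) : InjC E M :=
  (hI.2 M).1 h

lemma injC_of_isZero {I M : C} (hI : InjCogenC E I) (h : IsZero M) : InjC E M :=
  injC_of_memAdd hI (memAddC_of_isZero h)

lemma zero_mem (hP : ProgenC E (P : C)) : (0 : C) ∈ E :=
  (projC_of_isZero hP (isZero_zero C)).1

lemma projC_iso (hiso : IsoClosedC E) {X Y : C} (e : X ≅ Y) (h : ProjC E X) : ProjC E Y := by
  refine ⟨mem_of_iso hiso e h.1, fun A B Z f g hc k => ?_⟩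
  obtain ⟨l, hl⟩ := h.2 A B Z f g hc (e.hom ≫ k)
  exact ⟨e.inv ≫ l, by rw [Category.assoc, hl, Iso.inv_hom_id_assoc]⟩

lemma projC_retract (hP : ProgenC E (P : C)) {M M' : C} (i : M' ⟶ M) (p : M ⟶ M')
    (hip : i ≫ p = 𝟙 M') (h : ProjC E M) : ProjC E M' :=
  projC_of_memAdd hP (memAddC_retract i p hip ((hP.2 M).2 h))

end Aux

section Aux2

set_option linter.unusedSectionVars false

variable {E : Set C}

lemma shortExact_inl_snd (X Y : C) :
    (ShortComplex.mk (biprod.inl : X ⟶ X ⊞ Y) biprod.snd (by simp)).ShortExact := by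
  refine shortExact_mk' _ inferInstance inferInstance ?_
  intro T t ht
  refine ⟨t ≫ biprod.fst, ?_⟩
  apply biprod.hom_ext <;> simp [ht]

lemma mem_biprod (hext : ExtClosedC E) {X Y : C} (hX : X ∈ E) (hY : Y ∈ E) :
    (X ⊞ Y) ∈ E :=
  hext X (X ⊞ Y) Y biprod.inl biprod.snd (by simp) (shortExact_inl_snd X Y) hX hY

lemma confl_id_zero {X Z : C} (hZ : IsZero Z) (hX : X ∈ E) (hZE : Z ∈ E) :
    Confl E (𝟙 X) (0 : X ⟶ Z) := by
  have he : Epi (0 : X ⟶ Z) := by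
    refine Preadditive.epi_of_cancel_zero _ (fun g _ => hZ.eq_of_src _ _)
  refine ⟨hX, hX, hZE, by simp, shortExact_mk' _ inferInstance he ?_⟩
  intro T t _
  exact ⟨t, by simp⟩

noncomputable def retract_iso_biprod {X Y : C} (i : Y ⟶ X) (p : X ⟶ Y) (h : i ≫ p = 𝟙 Y) :
    X ≅ Y ⊞ kernel p := by
  have hq : (𝟙 X - p ≫ i) ≫ p = 0 := by
    simp only [Preadditive.sub_comp, Category.id_comp, Category.assoc, h, Category.comp_id]
    simp
  refine ⟨biprod.lift p (kernel.lift p (𝟙 X - p ≫ i) hq),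
          biprod.desc i (kernel.ι p), ?_, ?_⟩
  · rw [biprod.lift_desc, kernel.lift_ι]
    simp
  · apply biprod.hom_ext'
    · apply biprod.hom_ext
      · simp [h]
      · rw [← cancel_mono (kernel.ι p)]
        simp [reassoc_of% h]
    · apply biprod.hom_ext
      · simp [kernel.condition]
      · rw [← cancel_mono (kernel.ι p)]
        simp [kernel.condition]

lemma mem_of_retract (hiso : IsoClosedC E) (hsum : SummandClosedC E) {X Y : C}
    (i : Y ⟶ X) (p : X ⟶ Y) (h : i ≫ p = 𝟙 Y) (hX : X ∈ E) : Y ∈ E :=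
  hsum Y (kernel p) (mem_of_iso hiso (retract_iso_biprod i p h) hX)

lemma confl_pullback (hext : ExtClosedC E) {A B Z T : C} {a : A ⟶ B} {b : B ⟶ Z}
    (hc : Confl E a b) (h : T ⟶ Z) (hT : T ∈ E) :
    Confl E (pullback.lift a 0 (by simp [confl_w hc]) : A ⟶ pullback b h)
      (pullback.snd b h) := by
  haveI := confl_mono hc
  haveI := confl_epi hc
  have hm : Mono (pullback.lift a 0 (by simp [confl_w hc]) : A ⟶ pullback b h) :=
    mono_of_mono_fac (pullback.lift_fst a 0 _)
  have he : Epi (pullback.snd b h) := inferInstance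
  have hse := shortExact_mk' (f := (pullback.lift a 0 (by simp [confl_w hc]) : A ⟶ pullback b h))
    (g := pullback.snd b h) (pullback.lift_snd _ _ _) hm he ?_
  · exact confl_mk hext _ hse hc.1 hT
  · intro T' t ht
    have htb : (t ≫ pullback.fst b h) ≫ b = 0 := by
      rw [Category.assoc, pullback.condition, ← Category.assoc, ht, zero_comp]
    obtain ⟨u, hu⟩ := (confl_shortExact hc).exact.lift' (t ≫ pullback.fst b h) htb
    refine ⟨u, ?_⟩
    apply pullback.hom_ext
    · rw [Category.assoc]
      exact (congrArg (u ≫ ·) (pullback.lift_fst a 0 _)).trans hu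
    · rw [Category.assoc]
      exact (congrArg (u ≫ ·) (pullback.lift_snd a 0 _)).trans (by rw [ht, comp_zero])

lemma confl_biprod (hext : ExtClosedC E) {A B Z A' B' Z' : C}
    {f : A ⟶ B} {g : B ⟶ Z} {f' : A' ⟶ B'} {g' : B' ⟶ Z'}
    (h : Confl E f g) (h' : Confl E f' g') :
    Confl E (biprod.map f f') (biprod.map g g') := by
  have w : biprod.map f f' ≫ biprod.map g g' = 0 := by
    apply biprod.hom_ext <;> simp [confl_w h, confl_w h']
  haveI := confl_mono h; haveI := confl_mono h'
  haveI := confl_epi h; haveI := confl_epi h'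
  have hm : Mono (biprod.map f f') := by
    apply Preadditive.mono_of_cancel_zero
    intro T u hu
    apply biprod.hom_ext
    · have : (u ≫ biprod.fst) ≫ f = 0 := by
        rw [Category.assoc, ← biprod.map_fst, ← Category.assoc, hu, zero_comp]
      rw [zero_of_comp_mono _ this]; simp
    · have : (u ≫ biprod.snd) ≫ f' = 0 := by
        rw [Category.assoc, ← biprod.map_snd, ← Category.assoc, hu, zero_comp]
      rw [zero_of_comp_mono _ this]; simp
  have he : Epi (biprod.map g g') := by
    apply Preadditive.epi_of_cancel_zero
    intro T u hu
    apply biprod.hom_ext'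
    · have hh : g ≫ biprod.inl ≫ u = 0 := by
        rw [← biprod.inl_map_assoc, hu, comp_zero]
      rw [zero_of_epi_comp g hh]; simp
    · have hh : g' ≫ biprod.inr ≫ u = 0 := by
        rw [← biprod.inr_map_assoc, hu, comp_zero]
      rw [zero_of_epi_comp g' hh]; simp
  have hse := shortExact_mk' w hm he ?_
  · exact confl_mk hext w hse (mem_biprod hext h.1 h'.1) (mem_biprod hext h.2.2.1 h'.2.2.1)
  · intro T t ht
    have h1 : (t ≫ biprod.fst) ≫ g = 0 := by
      rw [Category.assoc, ← biprod.map_fst, ← Category.assoc, ht, zero_comp]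
    have h2 : (t ≫ biprod.snd) ≫ g' = 0 := by
      rw [Category.assoc, ← biprod.map_snd, ← Category.assoc, ht, zero_comp]
    obtain ⟨u1, hu1⟩ := (confl_shortExact h).exact.lift' _ h1
    obtain ⟨u2, hu2⟩ := (confl_shortExact h').exact.lift' _ h2
    refine ⟨biprod.lift u1 u2, ?_⟩
    apply biprod.hom_ext
    · simpa [biprod.map_fst] using hu1
    · simpa [biprod.map_snd] using hu2

noncomputable def confl_splitting_of_section {X Y Z : C} {f : X ⟶ Y} {g : Y ⟶ Z}
    (h : Confl E f g) (s : Z ⟶ Y) (hs : s ≫ g = 𝟙 Z) :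
    (ShortComplex.mk f g (confl_w h)).Splitting :=
  ShortComplex.Splitting.ofExactOfSection _ (confl_shortExact h).exact s hs (confl_mono h)

noncomputable def iso_biprod_of_confl_section {X Y Z : C} {f : X ⟶ Y} {g : Y ⟶ Z}
    (h : Confl E f g) (s : Z ⟶ Y) (hs : s ≫ g = 𝟙 Z) : Y ≅ X ⊞ Z :=
  (confl_splitting_of_section h s hs).isoBinaryBiproduct

lemma retract_of_confl_section {X Y Z : C} {f : X ⟶ Y} {g : Y ⟶ Z}
    (h : Confl E f g) (s : Z ⟶ Y) (hs : s ≫ g = 𝟙 Z) : ∃ r : Y ⟶ X, f ≫ r = 𝟙 X :=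
  ⟨(confl_splitting_of_section h s hs).r, (confl_splitting_of_section h s hs).f_r⟩

lemma confl_section_of_proj {X Y Z : C} {f : X ⟶ Y} {g : Y ⟶ Z}
    (h : Confl E f g) (hZ : ProjC E Z) : ∃ s : Z ⟶ Y, s ≫ g = 𝟙 Z :=
  hZ.2 X Y Z f g h (𝟙 Z)

lemma iso_biprod_of_confl_proj {X Y Z : C} {f : X ⟶ Y} {g : Y ⟶ Z}
    (h : Confl E f g) (hZ : ProjC E Z) : Nonempty (Y ≅ X ⊞ Z) := by
  obtain ⟨s, hs⟩ := confl_section_of_proj h hZ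
  exact ⟨iso_biprod_of_confl_section h s hs⟩

end Aux2

section Aux3

open ZeroObject

set_option linter.unusedSectionVars false
set_option maxHeartbeats 1000000

variable {E : Set C} {P : C}

/-- relative projective dimension `≤ d` (inductive formulation) -/
def pdle (E : Set C) : ℕ → C → Prop
  | 0, X => ProjC E X
  | (d+1), X => ∃ (K Q : C) (f : K ⟶ Q) (g : Q ⟶ X), Confl E f g ∧ ProjC E Q ∧ pdle E d K

lemma pdle_zero {X : C} : pdle E 0 X ↔ ProjC E X := Iff.rfl

lemma pdle_succ_iff {d : ℕ} {X : C} :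
    pdle E (d+1) X ↔
      ∃ (K Q : C) (f : K ⟶ Q) (g : Q ⟶ X), Confl E f g ∧ ProjC E Q ∧ pdle E d K :=
  Iff.rfl

lemma pdle_mem {d : ℕ} {X : C} (h : pdle E d X) : X ∈ E := by
  cases d with
  | zero => exact h.1
  | succ d => obtain ⟨K, Q, f, g, hc, _, _⟩ := h; exact hc.2.2.1

lemma confl_comp_iso (hiso : IsoClosedC E) {X Y Z Z' : C} {f : X ⟶ Y} {g : Y ⟶ Z}
    (h : Confl E f g) (e : Z ≅ Z') : Confl E f (g ≫ e.hom) := by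
  have := confl_of_iso hiso h (Iso.refl X) (Iso.refl Y) e
  simpa using this

lemma pdle_iso (hiso : IsoClosedC E) {d : ℕ} {X Y : C} (e : X ≅ Y) (h : pdle E d X) :
    pdle E d Y := by
  cases d with
  | zero => exact projC_iso hiso e h
  | succ d =>
    obtain ⟨K, Q, f, g, hc, hQ, hK⟩ := h
    exact ⟨K, Q, f, g ≫ e.hom, confl_comp_iso hiso hc e, hQ, hK⟩

lemma confl_zero_id {X Z : C} (hZ : IsZero Z) (hX : X ∈ E) (hZE : Z ∈ E) :
    Confl E (0 : Z ⟶ X) (𝟙 X) := by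
  have hm : Mono (0 : Z ⟶ X) :=
    Preadditive.mono_of_cancel_zero _ (fun g _ => hZ.eq_of_tgt _ _)
  refine ⟨hZE, hX, hX, by simp, shortExact_mk' _ hm inferInstance ?_⟩
  intro T t ht
  rw [Category.comp_id] at ht
  exact ⟨0, by simp [ht]⟩

lemma pdle_succ_of (hP : ProgenC E P) : ∀ (d : ℕ) {X : C}, pdle E d X → pdle E (d+1) X := by
  intro d
  induction d with
  | zero =>
    intro X h
    exact ⟨(0:C), X, 0, 𝟙 X, confl_zero_id (isZero_zero C) h.1 (zero_mem hP),
      h, projC_of_isZero hP (isZero_zero C)⟩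
  | succ d IH =>
    intro X h
    obtain ⟨K, Q, f, g, hc, hQ, hK⟩ := h
    exact ⟨K, Q, f, g, hc, hQ, IH hK⟩

lemma pdle_mono (hP : ProgenC E P) {d d' : ℕ} (hd : d ≤ d') {X : C}
    (h : pdle E d X) : pdle E d' X := by
  induction hd with
  | refl => exact h
  | step _ IH => exact pdle_succ_of hP _ IH

lemma pdle_of_proj (hP : ProgenC E P) {d : ℕ} {X : C} (h : ProjC E X) : pdle E d X :=
  pdle_mono hP (Nat.zero_le d) h

lemma projC_biprod (hext : ExtClosedC E) {X Y : C} (hX : ProjC E X) (hY : ProjC E Y) :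
    ProjC E (X ⊞ Y) := by
  refine ⟨mem_biprod hext hX.1 hY.1, fun A B Z f g hc k => ?_⟩
  obtain ⟨l1, hl1⟩ := hX.2 A B Z f g hc (biprod.inl ≫ k)
  obtain ⟨l2, hl2⟩ := hY.2 A B Z f g hc (biprod.inr ≫ k)
  refine ⟨biprod.desc l1 l2, ?_⟩
  apply biprod.hom_ext' <;> simp [hl1, hl2]

lemma pdle_biprod (hiso : IsoClosedC E) (hext : ExtClosedC E) :
    ∀ (d : ℕ) {X Y : C}, pdle E d X → pdle E d Y → pdle E d (X ⊞ Y) := by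
  intro d
  induction d with
  | zero => intro X Y hX hY; exact projC_biprod hext hX hY
  | succ d IH =>
    intro X Y hX hY
    obtain ⟨K, Q, f, g, hc, hQ, hK⟩ := hX
    obtain ⟨K', Q', f', g', hc', hQ', hK'⟩ := hY
    exact ⟨K ⊞ K', Q ⊞ Q', biprod.map f f', biprod.map g g',
      confl_biprod hext hc hc', projC_biprod hext hQ hQ', IH hK hK'⟩

lemma schanuel (hext : ExtClosedC E) {X K Q K' Q' : C}
    {f : K ⟶ Q} {g : Q ⟶ X} {f' : K' ⟶ Q'} {g' : Q' ⟶ X}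
    (c : Confl E f g) (c' : Confl E f' g') (pQ : ProjC E Q) (pQ' : ProjC E Q') :
    Nonempty (K ⊞ Q' ≅ K' ⊞ Q) := by
  have d1 := confl_pullback hext c g' pQ'.1
  have d2 := confl_pullback hext c' g pQ.1
  obtain ⟨e1⟩ := iso_biprod_of_confl_proj d1 pQ'
  obtain ⟨e2⟩ := iso_biprod_of_confl_proj d2 pQ
  exact ⟨e1.symm.trans ((pullbackSymmetry g g').trans e2)⟩

lemma pdle_retract (hiso : IsoClosedC E) (hext : ExtClosedC E) (hsum : SummandClosedC E)
    (hP : ProgenC E P) (d : ℕ) :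
    ∀ {X Y : C} (i : Y ⟶ X) (p : X ⟶ Y), i ≫ p = 𝟙 Y → pdle E d X → pdle E d Y := by
  induction d with
  | zero => intro X Y i p hip h; exact projC_retract hP i p hip h
  | succ d IH =>
    intro X Y i p hip h
    obtain ⟨K, Q, f, g, hc, hQ, hK⟩ := h
    have hXmem : X ∈ E := hc.2.2.1
    have eX : X ≅ Y ⊞ kernel p := retract_iso_biprod i p hip
    have hYmem : Y ∈ E := mem_of_retract hiso hsum i p hip hXmem
    have hYZmem : (Y ⊞ kernel p) ∈ E := mem_of_iso hiso eX hXmem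
    have hZmem : kernel p ∈ E :=
      hsum (kernel p) Y (mem_of_iso hiso (biprod.braiding Y (kernel p)) hYZmem)
    obtain ⟨KY, QY, fY, gY, cY, pQY⟩ := hP.1 Y hYmem
    obtain ⟨KZ, QZ, fZ, gZ, cZ, pQZ⟩ := hP.1 (kernel p) hZmem
    have csum := confl_biprod hext cY cZ
    have csum' := confl_comp_iso hiso csum eX.symm
    obtain ⟨eS⟩ := schanuel hext hc csum' hQ (projC_biprod hext pQY pQZ)
    have h1 : pdle E d (K ⊞ (QY ⊞ QZ)) :=
      pdle_biprod hiso hext d hK (pdle_of_proj hP (projC_biprod hext pQY pQZ))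
    have h2 : pdle E d ((KY ⊞ KZ) ⊞ Q) := pdle_iso hiso eS h1
    have h3 : pdle E d KY := by
      refine IH (biprod.inl ≫ biprod.inl) (biprod.fst ≫ biprod.fst) ?_ h2
      simp
    exact ⟨KY, QY, fY, gY, cY, pQY, h3⟩

end Aux3

section Aux4

set_option linter.unusedSectionVars false
set_option maxHeartbeats 1000000

open ZeroObject

open CategoryTheory.Abelian.Pseudoelement
open scoped Pseudoelement

attribute [local instance] CategoryTheory.Abelian.Pseudoelement.objectToSort
  CategoryTheory.Abelian.Pseudoelement.homToFun

variable {E : Set C} {P : C}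

private lemma papply_comp {X Y Z : C} (f : X ⟶ Y) (g : Y ⟶ Z) (a : X) :
    (f ≫ g) a = g (f a) := Abelian.Pseudoelement.comp_apply f g a

private lemma papply_congr {X Y : C} {f g : X ⟶ Y} (h : f = g) (a : X) : f a = g a := by rw [h]

private lemma papply_zero {X Y : C} (a : X) : (0 : X ⟶ Y) a = 0 :=
  Abelian.Pseudoelement.zero_apply _ _

private lemma papply_zero' {X Y : C} (f : X ⟶ Y) : f (0 : X) = 0 :=
  Abelian.Pseudoelement.apply_zero f

lemma pdle_middle (hiso : IsoClosedC E) (hext : ExtClosedC E) (d : ℕ) :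
    ∀ {A B Z : C} {f : A ⟶ B} {g : B ⟶ Z},
      Confl E f g → pdle E d A → pdle E d Z → pdle E d B := by
  induction d with
  | zero =>
    intro A B Z f g hc hA hZ
    obtain ⟨eB⟩ := iso_biprod_of_confl_proj hc hZ
    exact projC_iso hiso eB.symm (projC_biprod hext hA hZ)
  | succ d IH =>
    intro A B Z f g hc hA hZ
    obtain ⟨KA, QA, iA, pA, cA, pQA, hKA⟩ := hA
    obtain ⟨KZ, QZ, iZ, pZ, cZ, pQZ, hKZ⟩ := hZ
    obtain ⟨lz, hlz⟩ := pQZ.2 A B Z f g hc pZ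
    haveI := confl_mono hc; haveI := confl_epi hc
    haveI := confl_mono cA; haveI := confl_epi cA
    haveI := confl_mono cZ; haveI := confl_epi cZ
    set φ : QA ⊞ QZ ⟶ B := biprod.desc (pA ≫ f) lz with hφ
    have hinlφ : biprod.inl ≫ φ = pA ≫ f := biprod.inl_desc _ _
    have hinrφ : biprod.inr ≫ φ = lz := biprod.inr_desc _ _
    have hsndpZ : biprod.snd ≫ pZ = φ ≫ g := by
      apply biprod.hom_ext'
      · simp only [Category.assoc, reassoc_of% hinlφ, confl_w hc, comp_zero,
          biprod.inl_snd_assoc, zero_comp]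
      · simp only [Category.assoc, reassoc_of% hinrφ, hlz, biprod.inr_snd_assoc]
    have hepi : Epi φ := by
      apply Preadditive.epi_of_cancel_zero
      intro T h hh
      have h1 : f ≫ h = 0 := by
        have h2 : pA ≫ f ≫ h = 0 := by
          rw [← Category.assoc, ← hinlφ, Category.assoc, hh, comp_zero]
        exact zero_of_epi_comp pA h2
      have hgd : g ≫ (confl_shortExact hc).exact.desc h h1 = h :=
        (confl_shortExact hc).exact.g_desc h h1
      have h3 : pZ ≫ (confl_shortExact hc).exact.desc h h1 = 0 := by
        rw [← hlz, Category.assoc, hgd, ← hinrφ, Category.assoc, hh, comp_zero]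
      have h4 : (confl_shortExact hc).exact.desc h h1 = 0 := zero_of_epi_comp pZ h3
      rw [← hgd, h4, comp_zero]
    have hκAw : (iA ≫ biprod.inl) ≫ φ = 0 := by
      rw [Category.assoc, hinlφ, ← Category.assoc, confl_w cA, zero_comp]
    set κA : KA ⟶ kernel φ := kernel.lift φ (iA ≫ biprod.inl) hκAw with hκA
    have hκAι : κA ≫ kernel.ι φ = iA ≫ biprod.inl := kernel.lift_ι _ _ _
    have hκZw : (kernel.ι φ ≫ biprod.snd) ≫ pZ = 0 := by
      rw [Category.assoc, hsndpZ, ← Category.assoc, kernel.condition, zero_comp]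
    set κZ : kernel φ ⟶ KZ := (confl_shortExact cZ).exact.lift
      (kernel.ι φ ≫ biprod.snd) hκZw with hκZdef
    have hκZι : κZ ≫ iZ = kernel.ι φ ≫ biprod.snd :=
      (confl_shortExact cZ).exact.lift_f _ _
    have w2 : κA ≫ κZ = 0 := by
      rw [← cancel_mono iZ, Category.assoc, hκZι, ← Category.assoc, hκAι,
        Category.assoc, biprod.inl_snd, comp_zero, zero_comp]
    have hmκA : Mono κA := by
      have : Mono (iA ≫ (biprod.inl : QA ⟶ QA ⊞ QZ)) := mono_comp _ _
      exact mono_of_mono_fac hκAι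
    have rowExact := (shortExact_inl_snd QA QZ).exact
    have kerExact : (ShortComplex.mk (kernel.ι φ) φ (kernel.condition φ)).Exact :=
      ShortComplex.exact_of_f_is_kernel _ (kernelIsKernel φ)
    have heκZ : Epi κZ := by
      apply epi_of_pseudo_surjective
      intro x
      have hu : (iZ ≫ (biprod.inr : QZ ⟶ QA ⊞ QZ)) ≫ biprod.snd = iZ := by
        rw [Category.assoc, biprod.inr_snd, Category.comp_id]
      have e0 : ((iZ ≫ (biprod.inr : QZ ⟶ QA ⊞ QZ)) ≫ φ) ≫ g = 0 := by
        simp only [Category.assoc, reassoc_of% hinrφ, hlz, confl_w cZ]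
      have e1 : g (((iZ ≫ (biprod.inr : QZ ⟶ QA ⊞ QZ)) ≫ φ) x) = 0 := by
        rw [← papply_comp, e0, papply_zero]
      obtain ⟨a, ha⟩ := pseudo_exact_of_exact (confl_shortExact hc).exact _ e1
      obtain ⟨qa, hqa⟩ := pseudo_surjective_of_epi pA a
      have e2 : φ ((iZ ≫ (biprod.inr : QZ ⟶ QA ⊞ QZ)) x) = φ ((biprod.inl : QA ⟶ QA ⊞ QZ) qa) := by
        calc φ ((iZ ≫ (biprod.inr : QZ ⟶ QA ⊞ QZ)) x) = ((iZ ≫ (biprod.inr : QZ ⟶ QA ⊞ QZ)) ≫ φ) x :=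
              (papply_comp _ φ x).symm
        _ = f a := ha.symm
        _ = f (pA qa) := by rw [hqa]
        _ = (pA ≫ f) qa := (papply_comp pA f qa).symm
        _ = (biprod.inl ≫ φ) qa := (papply_congr hinlφ qa).symm
        _ = φ ((biprod.inl : QA ⟶ QA ⊞ QZ) qa) := papply_comp _ φ qa
      obtain ⟨z, hz0, hzg⟩ :=
        sub_of_eq_image φ ((iZ ≫ (biprod.inr : QZ ⟶ QA ⊞ QZ)) x) ((biprod.inl : QA ⟶ QA ⊞ QZ) qa) e2
      have hsnd0 : (biprod.snd : QA ⊞ QZ ⟶ QZ) ((biprod.inl : QA ⟶ QA ⊞ QZ) qa) = 0 := by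
        rw [← papply_comp, biprod.inl_snd, papply_zero]
      have hzsnd := hzg QZ biprod.snd hsnd0
      obtain ⟨k, hk⟩ := pseudo_exact_of_exact kerExact z hz0
      refine ⟨k, pseudo_injective_of_mono iZ ?_⟩
      calc iZ (κZ k) = (κZ ≫ iZ) k := (papply_comp κZ iZ k).symm
      _ = (kernel.ι φ ≫ biprod.snd) k := papply_congr hκZι k
      _ = (biprod.snd : QA ⊞ QZ ⟶ QZ) (kernel.ι φ k) := papply_comp _ _ k
      _ = (biprod.snd : QA ⊞ QZ ⟶ QZ) z := by rw [hk]
      _ = (biprod.snd : QA ⊞ QZ ⟶ QZ) ((iZ ≫ (biprod.inr : QZ ⟶ QA ⊞ QZ)) x) := hzsnd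
      _ = ((iZ ≫ (biprod.inr : QZ ⟶ QA ⊞ QZ)) ≫ biprod.snd) x := (papply_comp _ _ x).symm
      _ = iZ x := papply_congr hu x
    have hex : (ShortComplex.mk κA κZ w2).Exact := by
      apply exact_of_pseudo_exact
      intro b hb
      have h1 : (biprod.snd : QA ⊞ QZ ⟶ QZ) (kernel.ι φ b) = 0 := by
        calc (biprod.snd : QA ⊞ QZ ⟶ QZ) (kernel.ι φ b)
            = (kernel.ι φ ≫ biprod.snd) b := (papply_comp _ _ b).symm
        _ = (κZ ≫ iZ) b := (papply_congr hκZι b).symm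
        _ = iZ (κZ b) := papply_comp _ _ b
        _ = iZ 0 := by rw [hb]
        _ = 0 := papply_zero' iZ
      obtain ⟨qa, hqa⟩ := pseudo_exact_of_exact rowExact _ h1
      have h2 : f (pA qa) = 0 := by
        calc f (pA qa) = (pA ≫ f) qa := (papply_comp _ _ _).symm
        _ = (biprod.inl ≫ φ) qa := (papply_congr hinlφ qa).symm
        _ = φ ((biprod.inl : QA ⟶ QA ⊞ QZ) qa) := papply_comp _ _ _
        _ = φ (kernel.ι φ b) := by rw [hqa]
        _ = (kernel.ι φ ≫ φ) b := (papply_comp _ _ _).symm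
        _ = (0 : kernel φ ⟶ B) b := papply_congr (kernel.condition φ) b
        _ = 0 := papply_zero b
      have h3 : pA qa = 0 := zero_of_map_zero f (pseudo_injective_of_mono f) _ h2
      obtain ⟨ka, hka⟩ := pseudo_exact_of_exact (confl_shortExact cA).exact _ h3
      refine ⟨ka, pseudo_injective_of_mono (kernel.ι φ) ?_⟩
      calc kernel.ι φ (κA ka) = (κA ≫ kernel.ι φ) ka := (papply_comp _ _ _).symm
      _ = (iA ≫ biprod.inl) ka := papply_congr hκAι ka
      _ = (biprod.inl : QA ⟶ QA ⊞ QZ) (iA ka) := papply_comp _ _ _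
      _ = (biprod.inl : QA ⟶ QA ⊞ QZ) qa := by rw [hka]
      _ = kernel.ι φ b := hqa
    have hseK : (ShortComplex.mk κA κZ w2).ShortExact :=
      { exact := hex, mono_f := hmκA, epi_g := heκZ }
    have cK : Confl E κA κZ := confl_mk hext w2 hseK cA.1 cZ.1
    have hKd : pdle E d (kernel φ) := IH cK hKA hKZ
    have hseKer : (ShortComplex.mk (kernel.ι φ) φ (kernel.condition φ)).ShortExact :=
      { exact := kerExact, mono_f := inferInstance, epi_g := hepi }
    have cKer : Confl E (kernel.ι φ) φ := confl_mk hext _ hseKer cK.2.1 hc.2.1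
    exact ⟨kernel φ, QA ⊞ QZ, kernel.ι φ, φ, cKer, projC_biprod hext pQA pQZ, hKd⟩

lemma pdle_kernel (hiso : IsoClosedC E) (hext : ExtClosedC E) (hsum : SummandClosedC E)
    (hP : ProgenC E P) {d : ℕ} {A B Z : C} {f : A ⟶ B} {g : B ⟶ Z} (hc : Confl E f g)
    (hB : pdle E d B) (hZ : pdle E (d+1) Z) : pdle E d A := by
  obtain ⟨KZ, QZ, iZ, pZ, cZ, pQZ, hKZ⟩ := hZ
  have d1 := confl_pullback hext hc pZ pQZ.1
  have d2 := confl_pullback hext cZ g (pdle_mem hB)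
  have hD' : pdle E d (pullback pZ g) := pdle_middle hiso hext d d2 hKZ hB
  have hD : pdle E d (pullback g pZ) := pdle_iso hiso (pullbackSymmetry pZ g) hD'
  obtain ⟨eD⟩ := iso_biprod_of_confl_proj d1 pQZ
  have hAQ : pdle E d (A ⊞ QZ) := pdle_iso hiso eD hD
  exact pdle_retract hiso hext hsum hP d biprod.inl biprod.fst (by simp) hAQ

lemma pdle_cokernel (hiso : IsoClosedC E) (hext : ExtClosedC E) (hsum : SummandClosedC E)
    (hP : ProgenC E P) {d : ℕ} {A B Z : C} {f : A ⟶ B} {g : B ⟶ Z} (hc : Confl E f g)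
    (hA : pdle E d A) (hB : pdle E d B) : pdle E (d+1) Z := by
  have hZmem : Z ∈ E := hc.2.2.1
  obtain ⟨L, Q, fL, gQ, cL, pQ⟩ := hP.1 Z hZmem
  have d1 := confl_pullback hext hc gQ pQ.1
  have d2 := confl_pullback hext cL g (pdle_mem hB)
  obtain ⟨eD⟩ := iso_biprod_of_confl_proj d1 pQ
  have hD : pdle E d (pullback g gQ) :=
    pdle_iso hiso eD.symm (pdle_biprod hiso hext d hA (pdle_of_proj hP pQ))
  have hD' : pdle E d (pullback gQ g) := pdle_iso hiso (pullbackSymmetry g gQ) hD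
  have hL : pdle E d L := pdle_kernel hiso hext hsum hP d2 hD' (pdle_succ_of hP d hB)
  exact ⟨L, Q, fL, gQ, cL, pQ, hL⟩

end Aux4

section Aux5

set_option linter.unusedSectionVars false
set_option maxHeartbeats 1000000

open ZeroObject

variable {E : Set C} {P : C}

lemma isZero_biproduct_empty (Y : Fin 0 → C) : IsZero (⨁ Y) := by
  rw [IsZero.iff_id_eq_zero]
  apply biproduct.hom_ext
  intro i; exact i.elim0

noncomputable def biproductFinSuccIso {n : ℕ} (Y : Fin (n+1) → C) :
    (⨁ Y) ≅ Y 0 ⊞ (⨁ fun i : Fin n => Y i.succ) where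
  hom := biprod.lift (biproduct.π Y 0) (biproduct.lift fun i => biproduct.π Y i.succ)
  inv := biprod.desc (biproduct.ι Y 0) (biproduct.desc fun i => biproduct.ι Y i.succ)
  hom_inv_id := by
    rw [biprod.lift_desc, biproduct.lift_desc, ← biproduct.total, Fin.sum_univ_succ]
  inv_hom_id := by
    apply biprod.hom_ext'
    · apply biprod.hom_ext
      · simp
      · apply biproduct.hom_ext
        intro i
        simp [biproduct.ι_π_ne _ (Fin.succ_ne_zero i).symm]
    · apply biprod.hom_ext
      · apply biproduct.hom_ext'
        intro j
        simp [biproduct.ι_π_ne _ (Fin.succ_ne_zero j)]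
      · apply biproduct.hom_ext'
        intro j
        apply biproduct.hom_ext
        intro i
        by_cases h : j = i
        · subst h; simp
        · simp [biproduct.ι_π_ne _ h, biproduct.ι_π_ne _ (fun hh => h (Fin.succ_inj.mp hh))]
  
lemma pdle_biproduct (hiso : IsoClosedC E) (hext : ExtClosedC E) (hP : ProgenC E P)
    (d : ℕ) : ∀ (n : ℕ) (Y : Fin n → C), (∀ i, pdle E d (Y i)) → pdle E d (⨁ Y) := by
  intro n
  induction n with
  | zero =>
    intro Y _
    exact pdle_of_proj hP (projC_of_isZero hP (isZero_biproduct_empty Y))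
  | succ n IH =>
    intro Y h
    have h1 : pdle E d (Y 0 ⊞ ⨁ fun i : Fin n => Y i.succ) :=
      pdle_biprod hiso hext d (h 0) (IH _ fun i => h i.succ)
    exact pdle_iso hiso (biproductFinSuccIso Y).symm h1

lemma pdle_of_memAdd (hiso : IsoClosedC E) (hext : ExtClosedC E) (hsum : SummandClosedC E)
    (hP : ProgenC E P) {d : ℕ} {I M : C} (hM : memAddC I M) (hI : pdle E d I) :
    pdle E d M := by
  obtain ⟨n, ι, π, h⟩ := hM
  exact pdle_retract hiso hext hsum hP d ι π h
    (pdle_biproduct hiso hext hP d n (fun _ => I) (fun _ => hI))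

lemma pdle_of_pdLEC (hP : ProgenC E P) {I : C} {d : ℕ} (h : pdLEC E I d) :
    pdle E (d+1) I := by
  obtain ⟨K, Q, f, g, hK0, hQ, hconf, hz⟩ := h
  have main : ∀ j, j ≤ d+1 → pdle E j (K (d+1-j)) := by
    intro j
    induction j with
    | zero => intro _; exact projC_of_isZero hP hz
    | succ j IH =>
      intro hj
      have h1 : pdle E j (K (d+1-j)) := IH (by omega)
      have h2 : d+1-j = (d-j)+1 := by omega
      rw [h2] at h1
      have h3 : d+1-(j+1) = d - j := by omega
      rw [h3]
      exact ⟨K ((d-j)+1), Q (d-j), f (d-j), g (d-j), hconf (d-j), hQ (d-j), h1⟩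
  have hfin := main (d+1) le_rfl
  rw [Nat.sub_self] at hfin
  rwa [hK0] at hfin

lemma indec_of_local {X : C} (h : IsLocalRing (End X)) : IndecC X := by
  constructor
  · intro hz
    have h1 : (1 : End X) = 0 := hz.eq_of_src _ _
    exact one_ne_zero h1
  · rintro Y Z ⟨e⟩
    set p : X ⟶ Y := e.hom ≫ biprod.fst with hp
    set i : Y ⟶ X := biprod.inl ≫ e.inv with hi
    set q : X ⟶ Z := e.hom ≫ biprod.snd with hq
    set j : Z ⟶ X := biprod.inr ≫ e.inv with hj
    have hip : i ≫ p = 𝟙 Y := by simp [hi, hp]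
    have hjq : j ≫ q = 𝟙 Z := by simp [hj, hq]
    have htot : p ≫ i + q ≫ j = 𝟙 X := by
      simp only [hp, hi, hq, hj, Category.assoc]
      have hh : biprod.fst ≫ biprod.inl ≫ e.inv + biprod.snd ≫ biprod.inr ≫ e.inv
          = (biprod.fst ≫ biprod.inl + biprod.snd ≫ biprod.inr) ≫ e.inv := by
        rw [Preadditive.add_comp, Category.assoc, Category.assoc]
      rw [← Preadditive.comp_add, hh, biprod.total]
      simp
    have hidem : (p ≫ i) ≫ (p ≫ i) = p ≫ i := by
      rw [Category.assoc, ← Category.assoc i p, hip, Category.id_comp]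
    have hidem' : (q ≫ j) ≫ (q ≫ j) = q ≫ j := by
      rw [Category.assoc, ← Category.assoc j q, hjq, Category.id_comp]
    have key : (p ≫ i = 0) ∨ (q ≫ j = 0) := by
      let a : End X := p ≫ i
      let b : End X := q ≫ j
      have hab : a + b = 1 := htot
      have haa : a * a = a := hidem
      have hbb : b * b = b := hidem'
      rcases h.isUnit_or_isUnit_of_add_one hab with hu | hu
      · right
        have ha1 : a = 1 := hu.mul_left_cancel (by rw [mul_one]; exact haa)
        have hb0 : b = 0 := by
          apply add_left_cancel (a := a)
          rw [hab, ha1, add_zero]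
        exact hb0
      · left
        have hb1 : b = 1 := hu.mul_left_cancel (by rw [mul_one]; exact hbb)
        have ha0 : a = 0 := by
          apply add_right_cancel (b := b)
          rw [hab, zero_add, hb1]
        exact ha0
    rcases key with h0 | h0
    · left
      rw [IsZero.iff_id_eq_zero]
      calc 𝟙 Y = (i ≫ p) ≫ (i ≫ p) := by rw [hip]; simp
      _ = i ≫ (p ≫ i) ≫ p := by simp only [Category.assoc]
      _ = 0 := by rw [h0]; simp
    · right
      rw [IsZero.iff_id_eq_zero]
      calc 𝟙 Z = (j ≫ q) ≫ (j ≫ q) := by rw [hjq]; simp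
      _ = j ≫ (q ≫ j) ≫ q := by simp only [Category.assoc]
      _ = 0 := by rw [h0]; simp

lemma pdle_bound (hiso : IsoClosedC E) (hext : ExtClosedC E) (hsum : SummandClosedC E)
    (hP : ProgenC E P) (hKS : KrullSchmidtC E)
    (hfin : Finite (IsoClassesC {X | X ∈ E ∧ IndecC X})) :
    ∃ N : ℕ, ∀ X ∈ E, (∃ d, pdle E d X) → pdle E N X := by
  classical
  set S : Set C := {X | X ∈ E ∧ IndecC X} with hS
  let F : IsoClassesC S → ℕ := fun c =>
    if h : ∃ d, pdle E d ((Quotient.out c : S) : C) then h.choose else 0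
  obtain ⟨N, hN⟩ : ∃ N, ∀ c, F c ≤ N := by
    cases isEmpty_or_nonempty (IsoClassesC S) with
    | inl h => exact ⟨0, fun c => (h.false c).elim⟩
    | inr h =>
      obtain ⟨c₀, hc₀⟩ := Finite.exists_max F
      exact ⟨F c₀, hc₀⟩
  refine ⟨N, ?_⟩
  intro X hX hd
  obtain ⟨n, Y, hloc, ⟨e⟩⟩ := hKS X hX
  have hYpd : ∀ i, pdle E N (Y i) := by
    intro i
    obtain ⟨d, hdX⟩ := hd
    have hret : (biproduct.ι Y i ≫ e.inv) ≫ (e.hom ≫ biproduct.π Y i) = 𝟙 (Y i) := by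
      rw [Category.assoc, ← Category.assoc e.inv, Iso.inv_hom_id, Category.id_comp,
        biproduct.ι_π_self]
    have hYd : pdle E d (Y i) := pdle_retract hiso hext hsum hP d _ _ hret hdX
    have hYmem : Y i ∈ E := pdle_mem hYd
    have hYind : IndecC (Y i) := indec_of_local (hloc i)
    set c : IsoClassesC S :=
      Quotient.mk ((isoSetoidC C).comap (Subtype.val : S → C)) ⟨Y i, hYmem, hYind⟩ with hc
    have hrel : Nonempty (((Quotient.out c : S) : C) ≅ Y i) :=
      Quotient.exact (Quotient.out_eq c)
    obtain ⟨eo⟩ := hrel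
    have hex : ∃ d', pdle E d' ((Quotient.out c : S) : C) := ⟨d, pdle_iso hiso eo.symm hYd⟩
    have hFc : pdle E (F c) ((Quotient.out c : S) : C) := by
      have : F c = hex.choose := by simp only [F, dif_pos hex]
      rw [this]
      exact hex.choose_spec
    exact pdle_mono hP (hN c) (pdle_iso hiso eo hFc)
  exact pdle_iso hiso e.symm (pdle_biproduct hiso hext hP N n Y hYpd)

end Aux5

section Aux6

set_option linter.unusedSectionVars false
set_option maxHeartbeats 1000000

open ZeroObject

variable {E : Set C} {P : C}

/-- `Y` is a `d`-th cosyzygy. -/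
def cosyz (E : Set C) : ℕ → C → Prop
  | 0, Y => Y ∈ E
  | (d+1), Y => ∃ (Y' J : C) (f : Y' ⟶ J) (g : J ⟶ Y), Confl E f g ∧ InjC E J ∧ cosyz E d Y'

/-- The key lifting lemma: if `pd X ≤ d` and `Y` is a `d`-th cosyzygy, then every
conflation `Y → M → X` splits. -/
lemma key_lift (hiso : IsoClosedC E) (hext : ExtClosedC E) (d : ℕ) :
    ∀ {X Y M : C} {u : Y ⟶ M} {v : M ⟶ X}, pdle E d X → cosyz E d Y → Confl E u v →
      ∃ s : X ⟶ M, s ≫ v = 𝟙 X := by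
  induction d with
  | zero =>
    intro X Y M u v hX hY hc
    exact confl_section_of_proj hc hX
  | succ d IH =>
    intro X Y M u v hX hY hc
    obtain ⟨K, Q, ι, qX, cX, pQ, hK⟩ := hX
    obtain ⟨Y', J, a, b, cY, hJ, hY'⟩ := hY
    haveI := confl_mono hc; haveI := confl_epi hc
    haveI := confl_mono cX; haveI := confl_epi cX
    haveI := confl_mono cY; haveI := confl_epi cY
    obtain ⟨lq, hlq⟩ := pQ.2 Y M X u v hc qX
    have hk0 : (ι ≫ lq) ≫ v = 0 := by
      rw [Category.assoc, hlq, confl_w cX]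
    set k' : K ⟶ Y := (confl_shortExact hc).exact.lift (ι ≫ lq) hk0 with hk'def
    have hk'u : k' ≫ u = ι ≫ lq := (confl_shortExact hc).exact.lift_f _ _
    have hKmem : K ∈ E := cX.1
    have dN := confl_pullback hext cY k' hKmem
    obtain ⟨σ, hσ⟩ := IH hK hY' dN
    set t : K ⟶ J := σ ≫ pullback.fst b k' with htdef
    have htb : t ≫ b = k' := by
      rw [htdef, Category.assoc, pullback.condition, ← Category.assoc, hσ, Category.id_comp]
    obtain ⟨te, hte⟩ := hJ.2 K Q X ι qX cX t
    set lq' : Q ⟶ M := lq - te ≫ b ≫ u with hlq'def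
    have hι0 : ι ≫ lq' = 0 := by
      have e1 : ι ≫ te ≫ b ≫ u = ι ≫ lq := by
        rw [← Category.assoc, hte, ← Category.assoc, htb, hk'u]
      rw [hlq'def, Preadditive.comp_sub, e1, sub_self]
    have hdesc : qX ≫ (confl_shortExact cX).exact.desc lq' hι0 = lq' :=
      (confl_shortExact cX).exact.g_desc _ _
    refine ⟨(confl_shortExact cX).exact.desc lq' hι0, ?_⟩
    have hlv : lq' ≫ v = qX := by
      rw [hlq'def, Preadditive.sub_comp, hlq, Category.assoc, Category.assoc, confl_w hc,
        comp_zero, comp_zero, sub_zero]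
    rw [← cancel_epi qX, ← Category.assoc, hdesc, hlv, Category.comp_id]

/-- chains of conflations with injective middle terms, ending at an injective. -/
def ichain (E : Set C) : ℕ → C → Prop
  | 0, X => InjC E X
  | (n+1), X => ∃ (J X' : C) (f : X ⟶ J) (g : J ⟶ X'), Confl E f g ∧ InjC E J ∧ ichain E n X'

lemma idLEC_of_ichain (hiso : IsoClosedC E) {I : C} (hI : InjCogenC E I) (n : ℕ) :
    ∀ X : C, ichain E n X → idLEC E X n := by
  have hmem0 : (0 : C) ∈ E := (injC_of_isZero hI (isZero_zero C)).1
  induction n with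
  | zero =>
    intro X hX
    refine ⟨fun m => match m with | 0 => X | (_+1) => (0:C),
      fun m => match m with | 0 => X | (_+1) => (0:C),
      fun m => match m with | 0 => 𝟙 X | (_+1) => 𝟙 (0:C),
      fun m => match m with | 0 => (0 : X ⟶ (0:C)) | (_+1) => (0 : (0:C) ⟶ (0:C)),
      rfl, ?_, ?_, isZero_zero C⟩
    · intro m
      match m with
      | 0 => exact hX
      | (m+1) => exact injC_of_isZero hI (isZero_zero C)
    · intro m
      match m with
      | 0 => exact confl_id_zero (isZero_zero C) hX.1 hmem0
      | (m+1) => exact confl_id_zero (isZero_zero C) hmem0 hmem0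
  | succ n IH =>
    intro X hX
    obtain ⟨J, X', f, g, hc, hJ, hch⟩ := hX
    obtain ⟨K', I', f', g', hK0, hInj, hConf, hzero⟩ := IH X' hch
    refine ⟨fun m => match m with | 0 => X | (k+1) => K' k,
      fun m => match m with | 0 => J | (k+1) => I' k,
      fun m => match m with | 0 => f | (k+1) => f' k,
      fun m => match m with | 0 => g ≫ (eqToIso hK0.symm).hom | (k+1) => g' k,
      rfl, ?_, ?_, hzero⟩
    · intro m
      match m with
      | 0 => exact hJ
      | (k+1) => exact hInj k
    · intro m
      match m with
      | 0 => exact confl_comp_iso hiso hc (eqToIso hK0.symm)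
      | (k+1) => exact hConf k

end Aux6


universe v₁ u₁

/-- Lemma `lem:GSC`.
An exact category is modeled (via the Gabriel–Quillen embedding) as a full
subcategory `E` of an abelian category closed under isomorphisms, extensions and
direct summands, the conflations being the short exact sequences of the ambient
category with all terms in `E`.  If `E` is Krull–Schmidt with a progenerator `P`
and an injective cogenerator `I`, has finitely many indecomposables, and
`pd_E I < ∞`, then `id_E P < ∞`. -/
theorem statement_15 (C : Type u₁) [Category.{v₁} C] [Abelian C] (E : Set C)
    (hiso : IsoClosedC E) (hext : ExtClosedC E) (hsum : SummandClosedC E)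
    (hKS : KrullSchmidtC E)
    (hfin : Finite (IsoClassesC {X | X ∈ E ∧ IndecC X}))
    (P I : C) (hP : ProgenC E P) (hI : InjCogenC E I)
    (hpd : ∃ d, pdLEC E I d) : ∃ d, idLEC E P d := by
  classical
  obtain ⟨d₀, hpd₀⟩ := hpd
  have hpdleI : pdle E (d₀+1) I := pdle_of_pdLEC hP hpd₀
  obtain ⟨N, hbound⟩ := pdle_bound hiso hext hsum hP hKS hfin
  have hPmem : P ∈ E := (projC_self hP).1
  -- construct the chain of cosyzygies of P
  let step : (Σ' X : C, X ∈ E) → (Σ' X : C, X ∈ E) := fun s =>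
    ⟨(hI.1 s.1 s.2).choose_spec.choose,
     (hI.1 s.1 s.2).choose_spec.choose_spec.choose_spec.choose_spec.1.2.2.1⟩
  let seq : ℕ → (Σ' X : C, X ∈ E) := fun n => Nat.rec ⟨P, hPmem⟩ (fun _ s => step s) n
  let Cs : ℕ → C := fun n => (seq n).1
  let Js : ℕ → C := fun n => (hI.1 (seq n).1 (seq n).2).choose
  let fs : ∀ n, Cs n ⟶ Js n := fun n =>
    (hI.1 (seq n).1 (seq n).2).choose_spec.choose_spec.choose
  let gs : ∀ n, Js n ⟶ Cs (n+1) := fun n =>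
    (hI.1 (seq n).1 (seq n).2).choose_spec.choose_spec.choose_spec.choose
  have hconf : ∀ n, Confl E (fs n) (gs n) := fun n =>
    (hI.1 (seq n).1 (seq n).2).choose_spec.choose_spec.choose_spec.choose_spec.1
  have hJinj : ∀ n, InjC E (Js n) := fun n =>
    (hI.1 (seq n).1 (seq n).2).choose_spec.choose_spec.choose_spec.choose_spec.2
  -- each cosyzygy has finite projective dimension
  have hfinpd : ∀ m, ∃ d, pdle E d (Cs m) := by
    intro m
    induction m with
    | zero => exact ⟨0, projC_self hP⟩
    | succ m IH =>
      obtain ⟨d, hd⟩ := IH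
      have hJpd : pdle E (d₀+1) (Js m) :=
        pdle_of_memAdd hiso hext hsum hP ((hI.2 (Js m)).2 (hJinj m)) hpdleI
      refine ⟨max d (d₀+1) + 1, pdle_cokernel hiso hext hsum hP (hconf m) ?_ ?_⟩
      · exact pdle_mono hP (le_max_left _ _) hd
      · exact pdle_mono hP (le_max_right _ _) hJpd
  -- each Cs m is an m-th cosyzygy
  have hcos : ∀ m, cosyz E m (Cs m) := by
    intro m
    induction m with
    | zero => exact hPmem
    | succ m IH => exact ⟨Cs m, Js m, fs m, gs m, hconf m, hJinj m, IH⟩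
  -- the conflation at stage N splits
  have hpdN : pdle E N (Cs (N+1)) := hbound _ (seq (N+1)).2 (hfinpd (N+1))
  obtain ⟨σ, hσ⟩ := key_lift hiso hext N hpdN (hcos N) (hconf N)
  obtain ⟨r, hr⟩ := retract_of_confl_section (hconf N) σ hσ
  have hCNinj : InjC E (Cs N) :=
    injC_of_memAdd hI (memAddC_retract (fs N) r hr ((hI.2 (Js N)).2 (hJinj N)))
  -- build the ichain
  have build : ∀ k m, InjC E (Cs (m+k)) → ichain E k (Cs m) := by
    intro k
    induction k with
    | zero => intro m h; exact h
    | succ k IH =>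
      intro m h
      refine ⟨Js m, Cs (m+1), fs m, gs m, hconf m, hJinj m, IH (m+1) ?_⟩
      have he : m+1+k = m+(k+1) := by omega
      rwa [he]
  have hich : ichain E N P := by
    have := build N 0 (by rw [Nat.zero_add]; exact hCNinj)
    exact this
  exact ⟨N, idLEC_of_ichain hiso hI N P hich⟩


end PaperWakCat
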